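/- arXiv:2101.12606 — 11 statements merged into one kernel-verified Lean document; each statement's English description precedes it below -/
import Mathlib

section
/- Assume the discrete-time optimal control problem is strictly dissipative in one-step form with storage function λ satisfying λ(x) ≥ −D for all x ∈ X (D > 0) and α ∈ K∞. Assume moreover there exist γ ∈ K∞ and C > 0 such that V_T(x) ≤ V_T(x^e) + γ(‖x−x^e‖) + C for all x ∈ X and all horizons T. Then every optimal trajectory, i.e., every trajectory generated by an admissible control u for x0 ∈ X on horizon T with J_T(x0,u) = V_T(x0), satisfies Σ_{t=0}^{T−1} α(‖x(t)−x^e‖) ≤ γ(‖x0−x^e‖) + C + λ(x0) + D. -/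
/-- Trajectory of the discrete-time control system `x(t+1) = f(x(t), u(t))`, `x(0) = x0`. -/
def traj {n m : ℕ}
    (f : EuclideanSpace ℝ (Fin n) → EuclideanSpace ℝ (Fin m) → EuclideanSpace ℝ (Fin n))
    (x0 : EuclideanSpace ℝ (Fin n)) (u : ℕ → EuclideanSpace ℝ (Fin m)) :
    ℕ → EuclideanSpace ℝ (Fin n)
  | 0 => x0
  | t + 1 => f (traj f x0 u t) (u t)

/-- A control `u` is admissible for `x0` on horizon `T` if `u(t) ∈ U` for `t < T` and the
trajectory satisfies `x(t) ∈ X` for `t ≤ T`. -/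
def Admissible {n m : ℕ}
    (f : EuclideanSpace ℝ (Fin n) → EuclideanSpace ℝ (Fin m) → EuclideanSpace ℝ (Fin n))
    (X : Set (EuclideanSpace ℝ (Fin n))) (U : Set (EuclideanSpace ℝ (Fin m)))
    (x0 : EuclideanSpace ℝ (Fin n)) (u : ℕ → EuclideanSpace ℝ (Fin m)) (T : ℕ) : Prop :=
  (∀ t < T, u t ∈ U) ∧ (∀ t ≤ T, traj f x0 u t ∈ X)

/-- `α : [0,∞) → [0,∞)` is of class `K∞`: continuous, strictly increasing, unbounded
and `α(0) = 0`. -/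
def KInf (α : ℝ → ℝ) : Prop :=
  ContinuousOn α (Set.Ici 0) ∧ StrictMonoOn α (Set.Ici 0) ∧ α 0 = 0 ∧
    (∀ r ∈ Set.Ici (0:ℝ), 0 ≤ α r) ∧ (∀ M : ℝ, ∃ r ∈ Set.Ici (0:ℝ), M < α r)

/-- Under strict dissipativity with bounded-below storage and the bound
`V_T(x) ≤ V_T(xᵉ) + γ(‖x−xᵉ‖) + C`, every optimal trajectory satisfies
`Σ_{t<T} α(‖x(t)−xᵉ‖) ≤ γ(‖x0−xᵉ‖) + C + λ(x0) + D`. -/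
theorem optimal_trajectory_sum_bound {n m : ℕ}
    (f : EuclideanSpace ℝ (Fin n) → EuclideanSpace ℝ (Fin m) → EuclideanSpace ℝ (Fin n))
    (X : Set (EuclideanSpace ℝ (Fin n))) (U : Set (EuclideanSpace ℝ (Fin m)))
    (ℓ : EuclideanSpace ℝ (Fin n) → EuclideanSpace ℝ (Fin m) → ℝ)
    (J : ℕ → EuclideanSpace ℝ (Fin n) → (ℕ → EuclideanSpace ℝ (Fin m)) → ℝ)
    (hJ : ∀ T x0 u, J T x0 u = ∑ t ∈ Finset.range T, ℓ (traj f x0 u t) (u t))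
    (V : ℕ → EuclideanSpace ℝ (Fin n) → ℝ)
    (hV : ∀ T x0, V T x0 = sInf {c : ℝ | ∃ u, Admissible f X U x0 u T ∧ c = J T x0 u})
    (xe : EuclideanSpace ℝ (Fin n)) (ue : EuclideanSpace ℝ (Fin m))
    (hxe : xe ∈ X) (hue : ue ∈ U) (heq : f xe ue = xe)
    (lam : EuclideanSpace ℝ (Fin n) → ℝ) (α : ℝ → ℝ) (hα : KInf α)
    (hdiss : ∀ x ∈ X, ∀ u ∈ U, f x u ∈ X →
      lam (f x u) ≤ lam x + ℓ x u - ℓ xe ue - α ‖x - xe‖)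
    (D : ℝ) (hD : 0 < D) (hlam : ∀ x ∈ X, -D ≤ lam x)
    (γ : ℝ → ℝ) (hγ : KInf γ) (C : ℝ) (hC : 0 < C)
    (hVbound : ∀ x ∈ X, ∀ T : ℕ, V T x ≤ V T xe + γ ‖x - xe‖ + C) :
    ∀ T : ℕ, ∀ x0 ∈ X, ∀ u : ℕ → EuclideanSpace ℝ (Fin m),
      Admissible f X U x0 u T → J T x0 u = V T x0 →
      ∑ t ∈ Finset.range T, α ‖traj f x0 u t - xe‖ ≤ γ ‖x0 - xe‖ + C + lam x0 + D := by
  have hαpos : ∀ r : ℝ, 0 ≤ r → 0 ≤ α r := fun r hr => hα.2.2.2.1 r hr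
  -- telescoped dissipation inequality
  have key : ∀ (x0 : EuclideanSpace ℝ (Fin n)) (u : ℕ → EuclideanSpace ℝ (Fin m)) (T : ℕ),
      Admissible f X U x0 u T →
      lam (traj f x0 u T) + ∑ t ∈ Finset.range T, α ‖traj f x0 u t - xe‖ ≤
        lam x0 + ∑ t ∈ Finset.range T, (ℓ (traj f x0 u t) (u t) - ℓ xe ue) := by
    intro x0 u T
    induction T with
    | zero => intro _; simp [traj]
    | succ T ih =>
      intro hadm
      have hadm' : Admissible f X U x0 u T :=
        ⟨fun t ht => hadm.1 t (ht.trans (Nat.lt_succ_self T)),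
         fun t ht => hadm.2 t (ht.trans (Nat.le_succ T))⟩
      have hxT : traj f x0 u T ∈ X := hadm.2 T (Nat.le_succ T)
      have huT : u T ∈ U := hadm.1 T (Nat.lt_succ_self T)
      have hxT1 : f (traj f x0 u T) (u T) ∈ X := by
        have := hadm.2 (T + 1) le_rfl
        simpa [traj] using this
      have hd := hdiss (traj f x0 u T) hxT (u T) huT hxT1
      have := ih hadm'
      rw [Finset.sum_range_succ, Finset.sum_range_succ]
      have htraj : traj f x0 u (T + 1) = f (traj f x0 u T) (u T) := rfl
      rw [htraj]
      linarith
  -- constant control at equilibrium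
  have htraje : ∀ t : ℕ, traj f xe (fun _ => ue) t = xe := by
    intro t
    induction t with
    | zero => rfl
    | succ t ih => simp [traj, ih, heq]
  have hadm_e : ∀ T : ℕ, Admissible f X U xe (fun _ => ue) T :=
    fun T => ⟨fun _ _ => hue, fun t _ => by rw [htraje t]; exact hxe⟩
  have hJe : ∀ T : ℕ, J T xe (fun _ => ue) = T * ℓ xe ue := by
    intro T
    rw [hJ]
    simp [htraje]
  -- lower bound on any admissible cost, used for bddBelow and for V T xe ≤ T ℓe
  have hJlb : ∀ (x0 : EuclideanSpace ℝ (Fin n)) (u : ℕ → EuclideanSpace ℝ (Fin m)) (T : ℕ),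
      Admissible f X U x0 u T →
      (T : ℝ) * ℓ xe ue - D - lam x0 ≤ J T x0 u := by
    intro x0 u T hadm
    have hk := key x0 u T hadm
    have hsum : 0 ≤ ∑ t ∈ Finset.range T, α ‖traj f x0 u t - xe‖ :=
      Finset.sum_nonneg fun t _ => hαpos _ (norm_nonneg _)
    have hlamT : -D ≤ lam (traj f x0 u T) := hlam _ (hadm.2 T le_rfl)
    have hsplit : ∑ t ∈ Finset.range T, (ℓ (traj f x0 u t) (u t) - ℓ xe ue)
        = J T x0 u - T * ℓ xe ue := by
      rw [hJ, Finset.sum_sub_distrib]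
      simp [mul_comm]
    rw [hsplit] at hk
    linarith
  intro T x0 hx0 u hadm hopt
  -- V T xe ≤ T ℓe
  have hbdd : BddBelow {c : ℝ | ∃ u, Admissible f X U xe u T ∧ c = J T xe u} := by
    refine ⟨(T : ℝ) * ℓ xe ue - D - lam xe, ?_⟩
    rintro c ⟨u', hadm', rfl⟩
    exact hJlb xe u' T hadm'
  have hVe : V T xe ≤ (T : ℝ) * ℓ xe ue := by
    rw [hV]
    have hmem : ((T : ℝ) * ℓ xe ue) ∈ {c : ℝ | ∃ u, Admissible f X U xe u T ∧ c = J T xe u} :=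
      ⟨fun _ => ue, hadm_e T, (hJe T).symm⟩
    exact csInf_le hbdd hmem
  -- main chain
  have hk := key x0 u T hadm
  have hlamT : -D ≤ lam (traj f x0 u T) := hlam _ (hadm.2 T le_rfl)
  have hsplit : ∑ t ∈ Finset.range T, (ℓ (traj f x0 u t) (u t) - ℓ xe ue)
      = J T x0 u - T * ℓ xe ue := by
    rw [hJ, Finset.sum_sub_distrib]
    simp [mul_comm]
  rw [hsplit] at hk
  have hVb := hVbound x0 hx0 T
  linarith [hopt ▸ hVb]
end

section
/- (Strict dissipativity implies the turnpike property.) Assume the discrete-time optimal control problem is strictly dissipative in one-step form with storage function λ and α ∈ K∞, that λ(x) ≥ −D for all x ∈ X (D > 0), and that there exist γ ∈ K∞ and C > 0 such that |V_T(x) − V_T(x^e)| ≤ γ(‖x−x^e‖) + C and |λ(x)| ≤ γ(‖x−x^e‖) + C for all x ∈ X and all horizons T. Then for every ε > 0 and K > 0, every horizon T ∈ ℕ, every x0 ∈ X with ‖x0−x^e‖ ≤ K, and every optimal control u for x0 on horizon T (admissible with J_T(x0,u) = V_T(x0)), the number of times t ∈ {0,…,T−1} with ‖x(t)−x^e‖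 > ε is at most (2γ(K) + 2C + D)/α(ε); in particular this bound is independent of T and of x0. -/
/-- Strict dissipativity implies the turnpike property: for every optimal trajectory starting
in `B_K(xᵉ)`, the number of times `t < T` with `‖x(t)−xᵉ‖ > ε` is bounded by
`(2γ(K) + 2C + D)/α(ε)`, a bound independent of the horizon `T` and of `x0`. -/
theorem strict_dissipativity_implies_turnpike {n m : ℕ}
    (f : EuclideanSpace ℝ (Fin n) → EuclideanSpace ℝ (Fin m) → EuclideanSpace ℝ (Fin n))
    (X : Set (EuclideanSpace ℝ (Fin n))) (U : Set (EuclideanSpace ℝ (Fin m)))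
    (ℓ : EuclideanSpace ℝ (Fin n) → EuclideanSpace ℝ (Fin m) → ℝ)
    (J : ℕ → EuclideanSpace ℝ (Fin n) → (ℕ → EuclideanSpace ℝ (Fin m)) → ℝ)
    (hJ : ∀ T x0 u, J T x0 u = ∑ t ∈ Finset.range T, ℓ (traj f x0 u t) (u t))
    (V : ℕ → EuclideanSpace ℝ (Fin n) → ℝ)
    (hV : ∀ T x0, V T x0 = sInf {c : ℝ | ∃ u, Admissible f X U x0 u T ∧ c = J T x0 u})
    (xe : EuclideanSpace ℝ (Fin n)) (ue : EuclideanSpace ℝ (Fin m))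
    (hxe : xe ∈ X) (hue : ue ∈ U) (heq : f xe ue = xe)
    (lam : EuclideanSpace ℝ (Fin n) → ℝ) (α : ℝ → ℝ) (hα : KInf α)
    (hdiss : ∀ x ∈ X, ∀ u ∈ U, f x u ∈ X →
      lam (f x u) ≤ lam x + ℓ x u - ℓ xe ue - α ‖x - xe‖)
    (D : ℝ) (hD : 0 < D) (hlam : ∀ x ∈ X, -D ≤ lam x)
    (γ : ℝ → ℝ) (hγ : KInf γ) (C : ℝ) (hC : 0 < C)
    (hVbound : ∀ x ∈ X, ∀ T : ℕ, |V T x - V T xe| ≤ γ ‖x - xe‖ + C)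
    (hlambound : ∀ x ∈ X, |lam x| ≤ γ ‖x - xe‖ + C) :
    ∀ ε > (0:ℝ), ∀ K > (0:ℝ), ∀ T : ℕ, ∀ x0 ∈ X, ‖x0 - xe‖ ≤ K →
      ∀ u : ℕ → EuclideanSpace ℝ (Fin m),
        Admissible f X U x0 u T → J T x0 u = V T x0 →
        (((Finset.range T).filter (fun t => ε < ‖traj f x0 u t - xe‖)).card : ℝ) ≤
          (2 * γ K + 2 * C + D) / α ε := by
  intro ε hε K hK T x0 hx0 hx0K u hadm hopt
  obtain ⟨hαc, hαmono, hα0, hαnn, -⟩ := hα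
  obtain ⟨-, hγmono, -, -, -⟩ := hγ
  -- summed dissipation inequality along any admissible trajectory
  have key : ∀ (y0 : EuclideanSpace ℝ (Fin n)) (v : ℕ → EuclideanSpace ℝ (Fin m)),
      Admissible f X U y0 v T → ∀ t ≤ T,
      lam (traj f y0 v t) + ∑ s ∈ Finset.range t, α ‖traj f y0 v s - xe‖ ≤
        lam y0 + ∑ s ∈ Finset.range t, ℓ (traj f y0 v s) (v s) - t * ℓ xe ue := by
    intro y0 v hv t ht
    induction t with
    | zero => simp [traj]
    | succ t ih =>
      have ht' : t ≤ T := Nat.le_of_succ_le ht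
      have h1 := ih ht'
      have hx : traj f y0 v t ∈ X := hv.2 t ht'
      have hu : v t ∈ U := hv.1 t (Nat.lt_of_succ_le ht)
      have hx' : f (traj f y0 v t) (v t) ∈ X := by
        have := hv.2 (t + 1) ht
        simpa [traj] using this
      have h2 := hdiss _ hx _ hu hx'
      rw [Finset.sum_range_succ, Finset.sum_range_succ]
      have hstep : traj f y0 v (t + 1) = f (traj f y0 v t) (v t) := rfl
      rw [hstep]
      push_cast
      linarith
  -- constant trajectory at the equilibrium
  have htraje : ∀ t, traj f xe (fun _ => ue) t = xe := by
    intro t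
    induction t with
    | zero => rfl
    | succ t ih => simp [traj, ih, heq]
  -- the admissible cost set from xe is bounded below
  have hbdd : BddBelow {c : ℝ | ∃ u', Admissible f X U xe u' T ∧ c = J T xe u'} := by
    refine ⟨T * ℓ xe ue - D - lam xe, ?_⟩
    rintro c ⟨v, hv, rfl⟩
    have h := key xe v hv T le_rfl
    have hlamT : -D ≤ lam (traj f xe v T) := hlam _ (hv.2 T le_rfl)
    have hS : (0:ℝ) ≤ ∑ s ∈ Finset.range T, α ‖traj f xe v s - xe‖ :=
      Finset.sum_nonneg fun s _ => hαnn _ (Set.mem_Ici.mpr (norm_nonneg _))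
    rw [hJ]
    linarith
  have hVxe : V T xe ≤ T * ℓ xe ue := by
    rw [hV]
    refine csInf_le hbdd ?_
    refine ⟨fun _ => ue, ⟨fun t _ => hue, fun t _ => by rw [htraje]; exact hxe⟩, ?_⟩
    rw [hJ]
    simp [htraje, Finset.sum_const, Finset.card_range, nsmul_eq_mul]
  -- main sum bound
  have hmain := key x0 u hadm T le_rfl
  rw [hJ] at hopt
  have hγK : γ ‖x0 - xe‖ ≤ γ K := by
    rcases eq_or_lt_of_le hx0K with h | h
    · rw [h]
    · exact (hγmono (Set.mem_Ici.mpr (norm_nonneg _))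
        (Set.mem_Ici.mpr (le_trans (norm_nonneg _) hx0K)) h).le
  have hlam0 : lam x0 ≤ γ K + C := by
    have := le_trans (le_abs_self _) (hlambound x0 hx0)
    linarith
  have hVd : V T x0 - V T xe ≤ γ K + C := by
    have := le_trans (le_abs_self _) (hVbound x0 hx0 T)
    linarith
  have hlamT : -D ≤ lam (traj f x0 u T) := hlam _ (hadm.2 T le_rfl)
  have hS : ∑ s ∈ Finset.range T, α ‖traj f x0 u s - xe‖ ≤ 2 * γ K + 2 * C + D := by
    linarith
  have hαε : 0 < α ε := by
    have := hαmono Set.self_mem_Ici (Set.mem_Ici.mpr hε.le) hε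
    rwa [hα0] at this
  have hcard : ((((Finset.range T).filter
      (fun t => ε < ‖traj f x0 u t - xe‖)).card : ℝ)) * α ε ≤
      ∑ s ∈ Finset.range T, α ‖traj f x0 u s - xe‖ := by
    calc ((((Finset.range T).filter (fun t => ε < ‖traj f x0 u t - xe‖)).card : ℝ)) * α ε
        = ∑ _t ∈ (Finset.range T).filter (fun t => ε < ‖traj f x0 u t - xe‖), α ε := by
          rw [Finset.sum_const, nsmul_eq_mul]
      _ ≤ ∑ t ∈ (Finset.range T).filter (fun t => ε < ‖traj f x0 u t - xe‖),
            α ‖traj f x0 u t - xe‖ := by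
          refine Finset.sum_le_sum fun t htF => ?_
          have h := (Finset.mem_filter.mp htF).2
          exact (hαmono (Set.mem_Ici.mpr hε.le)
            (Set.mem_Ici.mpr (le_trans hε.le h.le)) h).le
      _ ≤ ∑ s ∈ Finset.range T, α ‖traj f x0 u s - xe‖ :=
          Finset.sum_le_sum_of_subset_of_nonneg (Finset.filter_subset _ _)
            (fun t _ _ => hαnn _ (Set.mem_Ici.mpr (norm_nonneg _)))
  rw [le_div_iff₀ hαε]
  exact le_trans hcard hS
end

section
/- (Near-optimal turnpike property.) Assume the discrete-time optimal control problem is strictly dissipative in one-step form with storage function λ and α ∈ K∞, that λ(x) ≥ −D for all x ∈ X (D > 0), and that there exist γ ∈ K∞ and C > 0 such that |V_T(x) − V_T(x^e)| ≤ γ(‖x−x^e‖) + C and |λ(x)| ≤ γ(‖x−x^e‖) + C for all x ∈ X and all horizons T. Then for every ε > 0, every δ ≥ 0, every horizon T ∈ ℕ, every x0 ∈ X, and every admissible control u for x0 on horizon T satisfying J_T(x0,u) ≤ V_T(x0) + δ, the number of times t ∈ {0,…,T−1} with ‖x(t)−x^e‖ > ε is at most (2γ(‖x0−x^e‖) + 2C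 + D + δ)/α(ε). -/
lemma traj_dissip {n m : ℕ}
    (f : EuclideanSpace ℝ (Fin n) → EuclideanSpace ℝ (Fin m) → EuclideanSpace ℝ (Fin n))
    (X : Set (EuclideanSpace ℝ (Fin n))) (U : Set (EuclideanSpace ℝ (Fin m)))
    (ℓ : EuclideanSpace ℝ (Fin n) → EuclideanSpace ℝ (Fin m) → ℝ)
    (xe : EuclideanSpace ℝ (Fin n)) (ue : EuclideanSpace ℝ (Fin m))
    (lam : EuclideanSpace ℝ (Fin n) → ℝ) (α : ℝ → ℝ)
    (hdiss : ∀ x ∈ X, ∀ u ∈ U, f x u ∈ X →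
      lam (f x u) ≤ lam x + ℓ x u - ℓ xe ue - α ‖x - xe‖)
    (x0 : EuclideanSpace ℝ (Fin n)) (u : ℕ → EuclideanSpace ℝ (Fin m)) (T : ℕ)
    (hadm : Admissible f X U x0 u T) :
    lam (traj f x0 u T) + ∑ t ∈ Finset.range T, α ‖traj f x0 u t - xe‖ ≤
      lam x0 + ∑ t ∈ Finset.range T, (ℓ (traj f x0 u t) (u t) - ℓ xe ue) := by
  induction T with
  | zero => simp [traj]
  | succ k ih =>
    have hadm' : Admissible f X U x0 u k :=
      ⟨fun t ht => hadm.1 t (ht.trans (Nat.lt_succ_self k)),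
       fun t ht => hadm.2 t (ht.trans (Nat.le_succ k))⟩
    have hk := ih hadm'
    have hstep := hdiss (traj f x0 u k) (hadm.2 k (Nat.le_succ k)) (u k)
      (hadm.1 k (Nat.lt_succ_self k)) (by exact hadm.2 (k+1) le_rfl)
    have htraj : traj f x0 u (k+1) = f (traj f x0 u k) (u k) := rfl
    rw [Finset.sum_range_succ, Finset.sum_range_succ, htraj]
    linarith

/-- Near-optimal turnpike property: for every admissible control with
`J_T(x0,u) ≤ V_T(x0) + δ`, the number of times `t < T` with `‖x(t)−xᵉ‖ > ε` is at most
`(2γ(‖x0−xᵉ‖) + 2C + D + δ)/α(ε)`. -/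
theorem near_optimal_turnpike {n m : ℕ}
    (f : EuclideanSpace ℝ (Fin n) → EuclideanSpace ℝ (Fin m) → EuclideanSpace ℝ (Fin n))
    (X : Set (EuclideanSpace ℝ (Fin n))) (U : Set (EuclideanSpace ℝ (Fin m)))
    (ℓ : EuclideanSpace ℝ (Fin n) → EuclideanSpace ℝ (Fin m) → ℝ)
    (J : ℕ → EuclideanSpace ℝ (Fin n) → (ℕ → EuclideanSpace ℝ (Fin m)) → ℝ)
    (hJ : ∀ T x0 u, J T x0 u = ∑ t ∈ Finset.range T, ℓ (traj f x0 u t) (u t))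
    (V : ℕ → EuclideanSpace ℝ (Fin n) → ℝ)
    (hV : ∀ T x0, V T x0 = sInf {c : ℝ | ∃ u, Admissible f X U x0 u T ∧ c = J T x0 u})
    (xe : EuclideanSpace ℝ (Fin n)) (ue : EuclideanSpace ℝ (Fin m))
    (hxe : xe ∈ X) (hue : ue ∈ U) (heq : f xe ue = xe)
    (lam : EuclideanSpace ℝ (Fin n) → ℝ) (α : ℝ → ℝ) (hα : KInf α)
    (hdiss : ∀ x ∈ X, ∀ u ∈ U, f x u ∈ X →
      lam (f x u) ≤ lam x + ℓ x u - ℓ xe ue - α ‖x - xe‖)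
    (D : ℝ) (hD : 0 < D) (hlam : ∀ x ∈ X, -D ≤ lam x)
    (γ : ℝ → ℝ) (hγ : KInf γ) (C : ℝ) (hC : 0 < C)
    (hVbound : ∀ x ∈ X, ∀ T : ℕ, |V T x - V T xe| ≤ γ ‖x - xe‖ + C)
    (hlambound : ∀ x ∈ X, |lam x| ≤ γ ‖x - xe‖ + C) :
    ∀ ε > (0:ℝ), ∀ δ ≥ (0:ℝ), ∀ T : ℕ, ∀ x0 ∈ X,
      ∀ u : ℕ → EuclideanSpace ℝ (Fin m),
        Admissible f X U x0 u T → J T x0 u ≤ V T x0 + δ →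
        (((Finset.range T).filter (fun t => ε < ‖traj f x0 u t - xe‖)).card : ℝ) ≤
          (2 * γ ‖x0 - xe‖ + 2 * C + D + δ) / α ε := by
  intro ε hε δ hδ T x0 hx0 u hadm hJle
  -- basic facts about α and γ
  have hαnn : ∀ r : ℝ, 0 ≤ r → 0 ≤ α r := fun r hr => hα.2.2.2.1 r hr
  have hαε : 0 < α ε := by
    have := hα.2.1 (Set.mem_Ici.mpr le_rfl) (Set.mem_Ici.mpr hε.le) hε
    rw [hα.2.2.1] at this
    exact this
  have hγ0 : γ 0 = 0 := hγ.2.2.1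
  -- equilibrium trajectory
  have htraje : ∀ t, traj f xe (fun _ => ue) t = xe := by
    intro t; induction t with
    | zero => rfl
    | succ k ih => show f (traj f xe (fun _ => ue) k) ue = xe; rw [ih, heq]
  have hadme : ∀ S : ℕ, Admissible f X U xe (fun _ => ue) S :=
    fun S => ⟨fun t _ => hue, fun t _ => by rw [htraje]; exact hxe⟩
  have hJe : ∀ S : ℕ, J S xe (fun _ => ue) = S * ℓ xe ue := by
    intro S; rw [hJ]
    simp [htraje]
  -- V T xe ≤ T * ℓ xe ue
  have hVxe : V T xe ≤ (T : ℝ) * ℓ xe ue := by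
    rw [hV]
    apply csInf_le
    · refine ⟨(T : ℝ) * ℓ xe ue - D - C, ?_⟩
      rintro c ⟨u', hadm', rfl⟩
      have hkey := traj_dissip f X U ℓ xe ue lam α hdiss xe u' T hadm'
      have hsum : ∑ t ∈ Finset.range T, (ℓ (traj f xe u' t) (u' t) - ℓ xe ue)
          = J T xe u' - (T : ℝ) * ℓ xe ue := by
        rw [hJ, Finset.sum_sub_distrib, Finset.sum_const, Finset.card_range,
          nsmul_eq_mul]
      have hαsum : (0:ℝ) ≤ ∑ t ∈ Finset.range T, α ‖traj f xe u' t - xe‖ :=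
        Finset.sum_nonneg fun t _ => hαnn _ (norm_nonneg _)
      have hlamT : -D ≤ lam (traj f xe u' T) := hlam _ (hadm'.2 T le_rfl)
      have hlamxe : lam xe ≤ γ ‖xe - xe‖ + C := (abs_le.mp (hlambound xe hxe)).2
      rw [sub_self, norm_zero, hγ0] at hlamxe
      rw [hsum] at hkey
      linarith
    · exact ⟨fun _ => ue, hadme T, (hJe T).symm⟩
  -- dissipation along the given trajectory
  have hkey := traj_dissip f X U ℓ xe ue lam α hdiss x0 u T hadm
  have hsum : ∑ t ∈ Finset.range T, (ℓ (traj f x0 u t) (u t) - ℓ xe ue)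
      = J T x0 u - (T : ℝ) * ℓ xe ue := by
    rw [hJ, Finset.sum_sub_distrib, Finset.sum_const, Finset.card_range, nsmul_eq_mul]
  rw [hsum] at hkey
  have hlamT : -D ≤ lam (traj f x0 u T) := hlam _ (hadm.2 T le_rfl)
  have hlamx0 : lam x0 ≤ γ ‖x0 - xe‖ + C := (abs_le.mp (hlambound x0 hx0)).2
  have hVb : V T x0 - V T xe ≤ γ ‖x0 - xe‖ + C := (abs_le.mp (hVbound x0 hx0 T)).2
  have hS : ∑ t ∈ Finset.range T, α ‖traj f x0 u t - xe‖ ≤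
      2 * γ ‖x0 - xe‖ + 2 * C + D + δ := by linarith
  -- count bound
  set F := (Finset.range T).filter (fun t => ε < ‖traj f x0 u t - xe‖) with hF
  have hcard : (F.card : ℝ) * α ε ≤ ∑ t ∈ Finset.range T, α ‖traj f x0 u t - xe‖ := by
    calc (F.card : ℝ) * α ε = ∑ _t ∈ F, α ε := by
          rw [Finset.sum_const, nsmul_eq_mul]
      _ ≤ ∑ t ∈ F, α ‖traj f x0 u t - xe‖ := by
          apply Finset.sum_le_sum
          intro t ht
          have hεt : ε < ‖traj f x0 u t - xe‖ := (Finset.mem_filter.mp ht).2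
          exact (hα.2.1 (Set.mem_Ici.mpr hε.le)
            (Set.mem_Ici.mpr (norm_nonneg _)) hεt).le
      _ ≤ ∑ t ∈ Finset.range T, α ‖traj f x0 u t - xe‖ :=
          Finset.sum_le_sum_of_subset_of_nonneg (Finset.filter_subset _ _)
            (fun t _ _ => hαnn _ (norm_nonneg _))
  rw [le_div_iff₀ hαε]
  linarith
end

section
/- (Dissipativity implies optimal operation at steady state.) Assume the discrete-time system is dissipative in one-step form with supply rate s(x,u) = ℓ(x,u) − ℓ(x^e,u^e) and storage function λ : X → ℝ satisfying λ(x) ≥ −D for all x ∈ X, i.e., λ(f(x,u)) ≤ λ(x) + ℓ(x,u) − ℓ(x^e,u^e) for all x ∈ X, u ∈ U with f(x,u) ∈ X. Then for every x0 ∈ X and every control sequence u : ℕ → ℝ^m that is admissible for x0 on every horizon T, one has liminf_{T→∞} (1/T) J_T(x0,u) ≥ ℓ(x^e,u^e). -/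
/-- Dissipativity implies optimal operation at steady state: for every control that is
admissible on every horizon, `liminf_{T→∞} (1/T) J_T(x0,u) ≥ ℓ(xᵉ,uᵉ)`. -/
theorem dissipativity_implies_optimal_operation_at_steady_state {n m : ℕ}
    (f : EuclideanSpace ℝ (Fin n) → EuclideanSpace ℝ (Fin m) → EuclideanSpace ℝ (Fin n))
    (X : Set (EuclideanSpace ℝ (Fin n))) (U : Set (EuclideanSpace ℝ (Fin m)))
    (ℓ : EuclideanSpace ℝ (Fin n) → EuclideanSpace ℝ (Fin m) → ℝ)
    (xe : EuclideanSpace ℝ (Fin n)) (ue : EuclideanSpace ℝ (Fin m))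
    (hxe : xe ∈ X) (hue : ue ∈ U) (heq : f xe ue = xe)
    (lam : EuclideanSpace ℝ (Fin n) → ℝ)
    (D : ℝ) (hlam : ∀ x ∈ X, -D ≤ lam x)
    (hdiss : ∀ x ∈ X, ∀ u ∈ U, f x u ∈ X →
      lam (f x u) ≤ lam x + ℓ x u - ℓ xe ue) :
    ∀ x0 ∈ X, ∀ u : ℕ → EuclideanSpace ℝ (Fin m),
      (∀ T : ℕ, Admissible f X U x0 u T) →
      (ℓ xe ue : EReal) ≤ Filter.liminf
        (fun T : ℕ => (((∑ t ∈ Finset.range T, ℓ (traj f x0 u t) (u t)) / T : ℝ) : EReal))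
        Filter.atTop := by
  intro x0 hx0 u hadm
  set L := ℓ xe ue with hL
  have key : ∀ T : ℕ, lam (traj f x0 u T) ≤
      lam x0 + (∑ t ∈ Finset.range T, ℓ (traj f x0 u t) (u t)) - T * L := by
    intro T
    induction T with
    | zero => simp [traj]
    | succ T ih =>
      have h1 := (hadm (T+1)).1 T (by omega)
      have h2 := (hadm (T+1)).2 T (by omega)
      have h3 := (hadm (T+1)).2 (T+1) le_rfl
      have hd := hdiss _ h2 _ h1 (by simpa [traj] using h3)
      rw [Finset.sum_range_succ]
      have htr : traj f x0 u (T+1) = f (traj f x0 u T) (u T) := rfl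
      rw [htr]
      push_cast
      linarith
  set C := D + lam x0 with hC
  have hb : ∀ T : ℕ, 1 ≤ T →
      L - C / T ≤ (∑ t ∈ Finset.range T, ℓ (traj f x0 u t) (u t)) / T := by
    intro T hT
    have hTpos : (0:ℝ) < T := by exact_mod_cast hT
    have h1 := key T
    have h2 := hlam _ ((hadm T).2 T le_rfl)
    rw [sub_div' (ne_of_gt hTpos), div_le_div_iff_of_pos_right hTpos]
    linarith
  have htendR : Filter.Tendsto (fun T : ℕ => (L - C / T : ℝ)) Filter.atTop (nhds L) := by
    have h0 : Filter.Tendsto (fun T : ℕ => (C / T : ℝ)) Filter.atTop (nhds 0) :=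
      tendsto_const_div_atTop_nhds_zero_nat C
    simpa using (tendsto_const_nhds.sub h0)
  have htend : Filter.Tendsto (fun T : ℕ => ((L - C / T : ℝ) : EReal)) Filter.atTop
      (nhds (L : EReal)) := (continuous_coe_real_ereal.tendsto L).comp htendR
  calc (L : EReal) = Filter.liminf (fun T : ℕ => ((L - C / T : ℝ) : EReal)) Filter.atTop :=
        htend.liminf_eq.symm
    _ ≤ _ := by
        apply Filter.liminf_le_liminf _ (Filter.isBounded_ge_of_bot) (Filter.isCobounded_ge_of_top)
        filter_upwards [Filter.eventually_ge_atTop 1] with T hT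
        exact_mod_cast hb T hT
end

section
/- (The available storage is a storage function.) Let s : ℝ^n × ℝ^m → ℝ be a supply rate, α ∈ K∞ and x^e ∈ X. For x0 ∈ X define the available storage V(x0) := sup over all T ∈ ℕ and all controls u admissible for x0 on horizon T of Σ_{t=0}^{T−1} ( −s(x(t),u(t)) + α(‖x(t)−x^e‖) ), and assume this supremum is finite for every x0 ∈ X. Then V(x0) ≥ 0 for all x0 ∈ X, and for every x0 ∈ X, every t ∈ ℕ and every control u admissible for x0 on horizon t, the strict dissipation inequality V(x(t)) ≤ V(x0) + Σ_{τ=0}^{t−1} ( s(x(τ),u(τ)) − α(‖x(τ)−x^e‖) ) holds; i.e., λ = V is a storage function certifying strict dissipativity. -/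
lemma traj_eq_of_eq_lt {n m : ℕ}
    (f : EuclideanSpace ℝ (Fin n) → EuclideanSpace ℝ (Fin m) → EuclideanSpace ℝ (Fin n))
    (x0 : EuclideanSpace ℝ (Fin n)) (u v : ℕ → EuclideanSpace ℝ (Fin m)) (t : ℕ)
    (h : ∀ τ < t, u τ = v τ) : ∀ τ ≤ t, traj f x0 u τ = traj f x0 v τ := by
  intro τ hτ
  induction τ with
  | zero => rfl
  | succ k ih =>
      have hk : k ≤ t := Nat.le_of_succ_le hτ
      have hk' : k < t := hτ
      simp only [traj, ih hk, h k hk']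

lemma traj_add {n m : ℕ}
    (f : EuclideanSpace ℝ (Fin n) → EuclideanSpace ℝ (Fin m) → EuclideanSpace ℝ (Fin n))
    (x0 : EuclideanSpace ℝ (Fin n)) (u : ℕ → EuclideanSpace ℝ (Fin m)) (t : ℕ) :
    ∀ τ, traj f x0 u (t + τ) = traj f (traj f x0 u t) (fun k => u (t + k)) τ := by
  intro τ
  induction τ with
  | zero => rfl
  | succ k ih =>
      show traj f x0 u ((t + k) + 1) = _
      simp only [traj, ih]

/-- The available storage
`V(x0) = sup_{T, u admissible} Σ_{t<T} (−s(x(t),u(t)) + α(‖x(t)−xᵉ‖))`,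
if finite, is nonnegative and is a storage function certifying strict dissipativity. -/
theorem available_storage_is_storage_function {n m : ℕ}
    (f : EuclideanSpace ℝ (Fin n) → EuclideanSpace ℝ (Fin m) → EuclideanSpace ℝ (Fin n))
    (X : Set (EuclideanSpace ℝ (Fin n))) (U : Set (EuclideanSpace ℝ (Fin m)))
    (s : EuclideanSpace ℝ (Fin n) → EuclideanSpace ℝ (Fin m) → ℝ)
    (α : ℝ → ℝ) (hα : KInf α)
    (xe : EuclideanSpace ℝ (Fin n)) (hxe : xe ∈ X)
    (V : EuclideanSpace ℝ (Fin n) → ℝ)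
    (hVdef : ∀ x0, V x0 = sSup {c : ℝ | ∃ T : ℕ, ∃ u, Admissible f X U x0 u T ∧
      c = ∑ t ∈ Finset.range T, (-s (traj f x0 u t) (u t) + α ‖traj f x0 u t - xe‖)})
    (hfin : ∀ x0 ∈ X, BddAbove {c : ℝ | ∃ T : ℕ, ∃ u, Admissible f X U x0 u T ∧
      c = ∑ t ∈ Finset.range T, (-s (traj f x0 u t) (u t) + α ‖traj f x0 u t - xe‖)}) :
    (∀ x0 ∈ X, 0 ≤ V x0) ∧
    (∀ x0 ∈ X, ∀ t : ℕ, ∀ u : ℕ → EuclideanSpace ℝ (Fin m), Admissible f X U x0 u t →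
      V (traj f x0 u t) ≤ V x0 +
        ∑ τ ∈ Finset.range t, (s (traj f x0 u τ) (u τ) - α ‖traj f x0 u τ - xe‖)) := by
  have hzero : ∀ x0 ∈ X, (0:ℝ) ∈ {c : ℝ | ∃ T : ℕ, ∃ u, Admissible f X U x0 u T ∧
      c = ∑ t ∈ Finset.range T, (-s (traj f x0 u t) (u t) + α ‖traj f x0 u t - xe‖)} := by
    intro x0 hx0
    refine ⟨0, fun _ => 0, ⟨fun t ht => absurd ht (Nat.not_lt_zero t), ?_⟩, by simp⟩
    intro τ hτ
    interval_cases τ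
    exact hx0
  constructor
  · intro x0 hx0
    rw [hVdef x0]
    exact le_csSup (hfin x0 hx0) (hzero x0 hx0)
  · intro x0 hx0 t u hu
    set y := traj f x0 u t with hy
    have hyX : y ∈ X := hu.2 t le_rfl
    rw [hVdef y, hVdef x0]
    apply csSup_le ⟨0, hzero y hyX⟩
    rintro c ⟨T, u', hu', rfl⟩
    -- concatenated control
    set w : ℕ → EuclideanSpace ℝ (Fin m) := fun τ => if τ < t then u τ else u' (τ - t) with hwdef
    have hwu : ∀ τ ≤ t, traj f x0 w τ = traj f x0 u τ := by
      apply traj_eq_of_eq_lt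
      intro τ hτ
      simp [hwdef, hτ]
    have hwt : ∀ τ < t, w τ = u τ := by
      intro τ hτ; simp [hwdef, hτ]
    have hshift : (fun k => w (t + k)) = u' := by
      funext k
      have : ¬ (t + k < t) := by omega
      simp [hwdef, this]
    have hwtraj : ∀ k, traj f x0 w (t + k) = traj f y u' k := by
      intro k
      rw [traj_add, hwu t le_rfl, hshift]
    -- admissibility of w on horizon t + T
    have hadm : Admissible f X U x0 w (t + T) := by
      constructor
      · intro τ hτ
        by_cases h : τ < t
        · rw [hwt τ h]; exact hu.1 τ h
        · have hτt : τ = t + (τ - t) := by omega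
          have : ¬ (τ < t) := h
          simp only [hwdef, this, if_false]
          exact hu'.1 (τ - t) (by omega)
      · intro τ hτ
        by_cases h : τ ≤ t
        · rw [hwu τ h]; exact hu.2 τ h
        · have hτt : τ = t + (τ - t) := by omega
          rw [hτt, hwtraj]
          exact hu'.2 (τ - t) (by omega)
    -- the total sum is in the set for x0
    have hmem : (∑ τ ∈ Finset.range (t + T),
        (-s (traj f x0 w τ) (w τ) + α ‖traj f x0 w τ - xe‖)) ∈
        {c : ℝ | ∃ T : ℕ, ∃ u, Admissible f X U x0 u T ∧
          c = ∑ τ ∈ Finset.range T, (-s (traj f x0 u τ) (u τ) + α ‖traj f x0 u τ - xe‖)} :=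
      ⟨t + T, w, hadm, rfl⟩
    have hle : (∑ τ ∈ Finset.range (t + T),
        (-s (traj f x0 w τ) (w τ) + α ‖traj f x0 w τ - xe‖)) ≤ sSup {c : ℝ | ∃ T : ℕ, ∃ u,
          Admissible f X U x0 u T ∧
          c = ∑ τ ∈ Finset.range T, (-s (traj f x0 u τ) (u τ) + α ‖traj f x0 u τ - xe‖)} :=
      le_csSup (hfin x0 hx0) hmem
    -- split the sum
    have hsplit : (∑ τ ∈ Finset.range (t + T),
        (-s (traj f x0 w τ) (w τ) + α ‖traj f x0 w τ - xe‖))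
        = (∑ τ ∈ Finset.range t, (-s (traj f x0 u τ) (u τ) + α ‖traj f x0 u τ - xe‖))
          + ∑ k ∈ Finset.range T, (-s (traj f y u' k) (u' k) + α ‖traj f y u' k - xe‖) := by
      rw [Finset.sum_range_add]
      congr 1
      · apply Finset.sum_congr rfl
        intro τ hτ
        rw [Finset.mem_range] at hτ
        rw [hwu τ hτ.le, hwt τ hτ]
      · apply Finset.sum_congr rfl
        intro k hk
        rw [hwtraj k, congrFun hshift k]
    have hcancel : (∑ τ ∈ Finset.range t, (s (traj f x0 u τ) (u τ) - α ‖traj f x0 u τ - xe‖))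
        + (∑ τ ∈ Finset.range t, (-s (traj f x0 u τ) (u τ) + α ‖traj f x0 u τ - xe‖)) = 0 := by
      rw [← Finset.sum_add_distrib]
      apply Finset.sum_eq_zero
      intro τ _
      ring
    rw [hsplit] at hle
    linarith
end

section
/- (The required supply is a storage function.) Let s : ℝ^n × ℝ^m → ℝ be a supply rate, α ∈ K∞ and x^e ∈ X. Assume every x ∈ X is reachable from x^e, i.e., for every x ∈ X there exist T ∈ ℕ and a control u admissible for x^e on horizon T whose trajectory satisfies x(T) = x. Define the required supply V(x) := inf over all such T and u of Σ_{t=0}^{T−1} ( s(x(t),u(t)) − α(‖x(t)−x^e‖) ), and assume V(x) ≥ −M for all x ∈ X with a constant M ≥ 0. Then for every x0 ∈ X, every t ∈ ℕ and every control u admissible for x0 on horizon t, the strict dissipation inequality V(x(t)) ≤ V(x0) + Σ_{τ=0}^{t−1} ( s(x(τ),u(τ)) − α(‖x(τ)−x^e‖) ) holds; i.e., λ = V is a storage function bounded from below certifying strict dissipativity. -/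
lemma traj_congr {n m : ℕ}
    (f : EuclideanSpace ℝ (Fin n) → EuclideanSpace ℝ (Fin m) → EuclideanSpace ℝ (Fin n))
    (x0 : EuclideanSpace ℝ (Fin n)) (u v : ℕ → EuclideanSpace ℝ (Fin m)) (k : ℕ)
    (h : ∀ τ < k, u τ = v τ) : traj f x0 u k = traj f x0 v k := by
  induction k with
  | zero => rfl
  | succ k ih =>
    simp only [traj, ih (fun τ hτ => h τ (Nat.lt_succ_of_lt hτ)), h k (Nat.lt_succ_self k)]

lemma traj_shift {n m : ℕ}
    (f : EuclideanSpace ℝ (Fin n) → EuclideanSpace ℝ (Fin m) → EuclideanSpace ℝ (Fin n))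
    (x0 : EuclideanSpace ℝ (Fin n)) (w : ℕ → EuclideanSpace ℝ (Fin m)) (T : ℕ)
    (u : ℕ → EuclideanSpace ℝ (Fin m)) (hw : ∀ i, w (T + i) = u i) (k : ℕ) :
    traj f x0 w (T + k) = traj f (traj f x0 w T) u k := by
  induction k with
  | zero => rfl
  | succ k ih => rw [← Nat.add_assoc]; show f (traj f x0 w (T + k)) (w (T + k)) = _; rw [ih, hw k]; rfl

/-- The required supply
`V(x) = inf { Σ_{t<T} (s(x(t),u(t)) − α(‖x(t)−xᵉ‖)) | trajectories from xᵉ to x }`,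
if bounded from below, is a storage function (bounded from below) certifying strict
dissipativity. -/
theorem required_supply_is_storage_function {n m : ℕ}
    (f : EuclideanSpace ℝ (Fin n) → EuclideanSpace ℝ (Fin m) → EuclideanSpace ℝ (Fin n))
    (X : Set (EuclideanSpace ℝ (Fin n))) (U : Set (EuclideanSpace ℝ (Fin m)))
    (s : EuclideanSpace ℝ (Fin n) → EuclideanSpace ℝ (Fin m) → ℝ)
    (α : ℝ → ℝ) (hα : KInf α)
    (xe : EuclideanSpace ℝ (Fin n)) (hxe : xe ∈ X)
    -- the set of supplies needed to reach `x` from `xᵉ`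
    (cost : EuclideanSpace ℝ (Fin n) → Set ℝ)
    (hcost : ∀ x, cost x = {c : ℝ | ∃ T : ℕ, ∃ u, Admissible f X U xe u T ∧
      traj f xe u T = x ∧
      c = ∑ t ∈ Finset.range T, (s (traj f xe u t) (u t) - α ‖traj f xe u t - xe‖)})
    -- every `x ∈ X` is reachable from `xᵉ`
    (hreach : ∀ x ∈ X, (cost x).Nonempty)
    (M : ℝ) (hM : 0 ≤ M)
    -- the required supply is bounded from below by `−M`
    (hbelow : ∀ x ∈ X, ∀ c ∈ cost x, -M ≤ c)
    (V : EuclideanSpace ℝ (Fin n) → ℝ)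
    (hVdef : ∀ x, V x = sInf (cost x)) :
    (∀ x ∈ X, -M ≤ V x) ∧
    (∀ x0 ∈ X, ∀ t : ℕ, ∀ u : ℕ → EuclideanSpace ℝ (Fin m), Admissible f X U x0 u t →
      V (traj f x0 u t) ≤ V x0 +
        ∑ τ ∈ Finset.range t, (s (traj f x0 u τ) (u τ) - α ‖traj f x0 u τ - xe‖)) := by
  have hbdd : ∀ x ∈ X, BddBelow (cost x) := fun x hx => ⟨-M, fun c hc => hbelow x hx c hc⟩
  constructor
  · intro x hx
    rw [hVdef]
    exact le_csInf (hreach x hx) (fun c hc => hbelow x hx c hc)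
  · intro x0 hx0 t u hu
    set S := ∑ τ ∈ Finset.range t, (s (traj f x0 u τ) (u τ) - α ‖traj f x0 u τ - xe‖) with hS
    have hxt : traj f x0 u t ∈ X := hu.2 t le_rfl
    rw [hVdef, hVdef]
    rw [← sub_le_iff_le_add]
    apply le_csInf (hreach x0 hx0)
    intro c hc
    rw [sub_le_iff_le_add]
    rw [hcost] at hc
    obtain ⟨T, w, hwadm, hwend, hcval⟩ := hc
    -- concatenated control
    set w' : ℕ → EuclideanSpace ℝ (Fin m) := fun τ => if τ < T then w τ else u (τ - T) with hw'
    have hagree : ∀ τ < T, w' τ = w τ := fun τ hτ => if_pos hτ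
    have htr1 : ∀ k ≤ T, traj f xe w' k = traj f xe w k := by
      intro k hk
      exact traj_congr f xe w' w k (fun τ hτ => hagree τ (lt_of_lt_of_le hτ hk))
    have hshift : ∀ i, w' (T + i) = u i := by
      intro i
      simp only [hw', Nat.add_sub_cancel_left, if_neg (by omega : ¬ T + i < T)]
    have htr2 : ∀ k, traj f xe w' (T + k) = traj f x0 u k := by
      intro k
      rw [traj_shift f xe w' T u hshift k, htr1 T le_rfl, hwend]
    have hadm : Admissible f X U xe w' (T + t) := by
      constructor
      · intro τ hτ
        by_cases h : τ < T
        · rw [hagree τ h]; exact hwadm.1 τ h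
        · rw [hw']; simp only [if_neg h]
          exact hu.1 (τ - T) (by omega)
      · intro k hk
        by_cases h : k ≤ T
        · rw [htr1 k h]; exact hwadm.2 k h
        · obtain ⟨j, rfl⟩ : ∃ j, k = T + j := ⟨k - T, by omega⟩
          rw [htr2 j]; exact hu.2 j (by omega)
    have hmem : c + S ∈ cost (traj f x0 u t) := by
      rw [hcost]
      refine ⟨T + t, w', hadm, htr2 t, ?_⟩
      rw [Finset.sum_range_add]
      congr 1
      · rw [hcval]
        apply Finset.sum_congr rfl
        intro i hi
        simp only [Finset.mem_range] at hi
        rw [htr1 i (le_of_lt hi), hagree i hi]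
      · rw [hS]
        apply Finset.sum_congr rfl
        intro i hi
        rw [htr2 i, hshift i]
    exact csInf_le (hbdd _ hxt) hmem
end

section
/- (MPC Lyapunov decrease with terminal conditions.) Let X_0 ⊆ X be a terminal constraint set and F : X → ℝ a terminal cost, and define V_T^F(x0) := inf over all controls u admissible for x0 on horizon T whose trajectory additionally satisfies x(T) ∈ X_0, of J_T(x0,u) + F(x(T)). Assume: (a) for every x ∈ X_0 there exists u ∈ U with f(x,u) ∈ X_0 ⊆ X and F(f(x,u)) ≤ F(x) − ℓ(x,u) + ℓ(x^e,u^e); (b) x0 ∈ X admits an optimal control u* for this problem, i.e., u* is admissible for x0 on horizon T with x*(T) ∈ X_0 and J_T(x0,u*) + F(x*(T)) = V_T^F(x0), and the infimum defining V_T^F(f(x0,u*(0))) is over a nonempty set. Then V_T^F(f(x0,u*(0))) ≤ V_T^F(x0) − ℓ(x0,u*(0)) + ℓ(x^e,u^e). -/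
/-- MPC Lyapunov decrease with terminal conditions: under the terminal-cost compatibility
condition on `X₀`, the optimal value function of the terminal-constrained problem decreases
along the MPC closed loop: `V_T^F(f(x0,u*(0))) ≤ V_T^F(x0) − ℓ(x0,u*(0)) + ℓ(xᵉ,uᵉ)`. -/
theorem mpc_lyapunov_decrease {n m : ℕ}
    (f : EuclideanSpace ℝ (Fin n) → EuclideanSpace ℝ (Fin m) → EuclideanSpace ℝ (Fin n))
    (X : Set (EuclideanSpace ℝ (Fin n))) (U : Set (EuclideanSpace ℝ (Fin m)))
    (ℓ : EuclideanSpace ℝ (Fin n) → EuclideanSpace ℝ (Fin m) → ℝ)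
    (xe : EuclideanSpace ℝ (Fin n)) (ue : EuclideanSpace ℝ (Fin m))
    (hxe : xe ∈ X) (hue : ue ∈ U) (heq : f xe ue = xe)
    (X0 : Set (EuclideanSpace ℝ (Fin n))) (hX0 : X0 ⊆ X)
    (F : EuclideanSpace ℝ (Fin n) → ℝ)
    (T : ℕ) (hT : 0 < T)
    (VTF : EuclideanSpace ℝ (Fin n) → EReal)
    (hVTF : ∀ y, VTF y = sInf {c : EReal | ∃ u, Admissible f X U y u T ∧
      traj f y u T ∈ X0 ∧
      c = (((∑ t ∈ Finset.range T, ℓ (traj f y u t) (u t)) + F (traj f y u T) : ℝ) : EReal)})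
    -- (a) terminal cost compatibility on the terminal constraint set
    (hterm : ∀ x ∈ X0, ∃ u ∈ U, f x u ∈ X0 ∧ F (f x u) ≤ F x - ℓ x u + ℓ xe ue)
    -- (b) an optimal control `u*` for `x0` exists ...
    (x0 : EuclideanSpace ℝ (Fin n)) (hx0 : x0 ∈ X)
    (ustar : ℕ → EuclideanSpace ℝ (Fin m))
    (hadm : Admissible f X U x0 ustar T)
    (hterm' : traj f x0 ustar T ∈ X0)
    (hopt : (((∑ t ∈ Finset.range T, ℓ (traj f x0 ustar t) (ustar t)) +
      F (traj f x0 ustar T) : ℝ) : EReal) = VTF x0)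
    -- ... and the infimum defining `V_T^F(f(x0,u*(0)))` is over a nonempty set
    (hne : ∃ u, Admissible f X U (f x0 (ustar 0)) u T ∧ traj f (f x0 (ustar 0)) u T ∈ X0) :
    VTF (f x0 (ustar 0)) ≤ VTF x0 - ((ℓ x0 (ustar 0) : ℝ) : EReal) + ((ℓ xe ue : ℝ) : EReal) := by

  obtain ⟨k, rfl⟩ : ∃ k, T = k + 1 := ⟨T - 1, (Nat.succ_pred_eq_of_pos hT).symm⟩
  obtain ⟨κ, hκU, hκX0, hκF⟩ := hterm _ hterm'
  set y := f x0 (ustar 0) with hy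
  set uplus : ℕ → EuclideanSpace ℝ (Fin m) := fun t => if t < k then ustar (t + 1) else κ
    with huplus
  have htraj : ∀ t ≤ k, traj f y uplus t = traj f x0 ustar (t + 1) := by
    intro t ht
    induction t with
    | zero => simp [traj, hy]
    | succ s ih =>
      have hs : s ≤ k := Nat.le_of_succ_le ht
      have hsk : s < k := ht
      show f (traj f y uplus s) (uplus s) = _
      rw [ih hs]
      simp only [traj, ih hs, huplus, if_pos hsk]
  have htrajT : traj f y uplus (k + 1) = f (traj f x0 ustar (k + 1)) κ := by
    show f (traj f y uplus k) (uplus k) = _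
    rw [htraj k le_rfl]
    simp only [traj, htraj k le_rfl, huplus, lt_irrefl, if_neg (lt_irrefl k)]
  have hadm' : Admissible f X U y uplus (k + 1) := by
    constructor
    · intro t ht
      by_cases h : t < k
      · simpa [huplus, if_pos h] using hadm.1 (t + 1) (by omega)
      · simpa [huplus, if_neg h] using hκU
    · intro t ht
      rcases Nat.lt_or_ge t (k + 1) with h | h
      · rw [htraj t (by omega)]
        exact hadm.2 (t + 1) (by omega)
      · have : t = k + 1 := by omega
        subst this
        rw [htrajT]
        exact hX0 hκX0
  have hterm'' : traj f y uplus (k + 1) ∈ X0 := by rw [htrajT]; exact hκX0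
  -- cost comparison
  have hsum : (∑ t ∈ Finset.range (k + 1), ℓ (traj f y uplus t) (uplus t))
      = (∑ t ∈ Finset.range (k + 1), ℓ (traj f x0 ustar t) (ustar t))
        - ℓ x0 (ustar 0) + ℓ (traj f x0 ustar (k + 1)) κ := by
    rw [Finset.sum_range_succ]
    have h1 : ∀ t ∈ Finset.range k, ℓ (traj f y uplus t) (uplus t)
        = ℓ (traj f x0 ustar (t + 1)) (ustar (t + 1)) := by
      intro t ht
      have htk : t < k := Finset.mem_range.mp ht
      rw [htraj t (le_of_lt htk), huplus]
      simp [if_pos htk]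
    rw [Finset.sum_congr rfl h1, htraj k le_rfl, huplus]
    simp only [lt_irrefl, if_neg (lt_irrefl k)]
    have h2 : (∑ t ∈ Finset.range (k + 1), ℓ (traj f x0 ustar t) (ustar t))
        = ℓ (traj f x0 ustar 0) (ustar 0)
          + ∑ t ∈ Finset.range k, ℓ (traj f x0 ustar (t + 1)) (ustar (t + 1)) := by
      rw [Finset.sum_range_succ']; ring
    rw [h2]
    simp [traj]
  set c : ℝ := (∑ t ∈ Finset.range (k + 1), ℓ (traj f y uplus t) (uplus t))
      + F (traj f y uplus (k + 1)) with hc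
  have hmem : (c : EReal) ∈ {c : EReal | ∃ u, Admissible f X U y u (k + 1) ∧
      traj f y u (k + 1) ∈ X0 ∧
      c = (((∑ t ∈ Finset.range (k + 1), ℓ (traj f y u t) (u t))
        + F (traj f y u (k + 1)) : ℝ) : EReal)} :=
    ⟨uplus, hadm', hterm'', rfl⟩
  have h1 : VTF y ≤ (c : EReal) := by rw [hVTF]; exact sInf_le hmem
  have h2 : c ≤ ((∑ t ∈ Finset.range (k + 1), ℓ (traj f x0 ustar t) (ustar t))
      + F (traj f x0 ustar (k + 1))) - ℓ x0 (ustar 0) + ℓ xe ue := by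
    rw [hc, hsum, htrajT]
    linarith [hκF]
  calc VTF y ≤ (c : EReal) := h1
    _ ≤ ((((∑ t ∈ Finset.range (k + 1), ℓ (traj f x0 ustar t) (ustar t))
        + F (traj f x0 ustar (k + 1))) - ℓ x0 (ustar 0) + ℓ xe ue : ℝ) : EReal) := by
        exact_mod_cast h2
    _ = VTF x0 - ((ℓ x0 (ustar 0) : ℝ) : EReal) + ((ℓ xe ue : ℝ) : EReal) := by
        rw [← hopt]
        push_cast
        rfl
end

section
/- (Optimal averaged performance of MPC with terminal conditions.) Assume the discrete-time system is dissipative in one-step form with supply rate ℓ(x,u) − ℓ(x^e,u^e) and storage function λ : X → ℝ bounded from below, i.e., λ(f(x,u)) ≤ λ(x) + ℓ(x,u) − ℓ(x^e,u^e) for all x ∈ X, u ∈ U with f(x,u) ∈ X. Let V : X → ℝ be bounded from below and let x_MPC : ℕ → X, u_MPC : ℕ → U satisfy x_MPC(k+1) = f(x_MPC(k), u_MPC(k)) and the decrease condition V(x_MPC(k+1)) ≤ V(x_MPC(k)) − ℓ(x_MPC(k),u_MPC(k)) + ℓ(x^e,u^e) for all k ∈ ℕ. Then the averaged infinite-horizon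 closed-loop performance satisfies lim_{S→∞} (1/S) Σ_{k=0}^{S−1} ℓ(x_MPC(k),u_MPC(k)) = ℓ(x^e,u^e). -/
/-- Optimal averaged performance of MPC with terminal conditions: if the system is
dissipative with supply rate `ℓ(x,u) − ℓ(xᵉ,uᵉ)` and bounded-below storage function, and the
MPC closed loop satisfies the Lyapunov decrease condition with a bounded-below `V`, then the
averaged infinite-horizon closed-loop performance equals `ℓ(xᵉ,uᵉ)`. -/
theorem mpc_average_performance_optimal {n m : ℕ}
    (f : EuclideanSpace ℝ (Fin n) → EuclideanSpace ℝ (Fin m) → EuclideanSpace ℝ (Fin n))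
    (X : Set (EuclideanSpace ℝ (Fin n))) (U : Set (EuclideanSpace ℝ (Fin m)))
    (ℓ : EuclideanSpace ℝ (Fin n) → EuclideanSpace ℝ (Fin m) → ℝ)
    (xe : EuclideanSpace ℝ (Fin n)) (ue : EuclideanSpace ℝ (Fin m))
    (hxe : xe ∈ X) (hue : ue ∈ U) (heq : f xe ue = xe)
    (lam : EuclideanSpace ℝ (Fin n) → ℝ)
    (Clam : ℝ) (hlambd : ∀ x ∈ X, -Clam ≤ lam x)
    (hdiss : ∀ x ∈ X, ∀ u ∈ U, f x u ∈ X →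
      lam (f x u) ≤ lam x + ℓ x u - ℓ xe ue)
    (V : EuclideanSpace ℝ (Fin n) → ℝ)
    (B : ℝ) (hVbd : ∀ x ∈ X, -B ≤ V x)
    (xM : ℕ → EuclideanSpace ℝ (Fin n)) (uM : ℕ → EuclideanSpace ℝ (Fin m))
    (hxM : ∀ k, xM k ∈ X) (huM : ∀ k, uM k ∈ U)
    (hdyn : ∀ k, xM (k + 1) = f (xM k) (uM k))
    (hdec : ∀ k, V (xM (k + 1)) ≤ V (xM k) - ℓ (xM k) (uM k) + ℓ xe ue) :
    Filter.Tendsto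
      (fun S : ℕ => (∑ k ∈ Finset.range S, ℓ (xM k) (uM k)) / S)
      Filter.atTop (nhds (ℓ xe ue)) := by
  set e := ℓ xe ue with he
  have hup : ∀ S : ℕ, (∑ k ∈ Finset.range S, ℓ (xM k) (uM k)) ≤ V (xM 0) - V (xM S) + S * e := by
    intro S
    induction S with
    | zero => simp
    | succ S ih =>
      rw [Finset.sum_range_succ]
      have := hdec S
      push_cast
      linarith
  have hlo : ∀ S : ℕ, lam (xM S) - lam (xM 0) + S * e ≤ (∑ k ∈ Finset.range S, ℓ (xM k) (uM k)) := by
    intro S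
    induction S with
    | zero => simp
    | succ S ih =>
      rw [Finset.sum_range_succ]
      have h := hdiss (xM S) (hxM S) (uM S) (huM S) (by rw [← hdyn S]; exact hxM (S+1))
      rw [← hdyn S] at h
      push_cast
      linarith
  have hA : Filter.Tendsto (fun S : ℕ => e + (-Clam - lam (xM 0)) / S) Filter.atTop (nhds e) := by
    have := (tendsto_const_div_atTop_nhds_zero_nat (-Clam - lam (xM 0))).const_add e
    simpa using this
  have hB2 : Filter.Tendsto (fun S : ℕ => e + (V (xM 0) + B) / S) Filter.atTop (nhds e) := by
    have := (tendsto_const_div_atTop_nhds_zero_nat (V (xM 0) + B)).const_add e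
    simpa using this
  refine tendsto_of_tendsto_of_tendsto_of_le_of_le' hA hB2 ?_ ?_
  · filter_upwards [Filter.eventually_ge_atTop 1] with S hS
    have hSpos : (0:ℝ) < S := by exact_mod_cast hS
    rw [le_div_iff₀ hSpos]
    have hid : (e + (-Clam - lam (xM 0)) / ↑S) * ↑S = ↑S * e + (-Clam - lam (xM 0)) := by
      field_simp
    rw [hid]
    have h1 := hlo S
    have h2 := hlambd (xM S) (hxM S)
    linarith
  · filter_upwards [Filter.eventually_ge_atTop 1] with S hS
    have hSpos : (0:ℝ) < S := by exact_mod_cast hS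
    rw [div_le_iff₀ hSpos]
    have hid : (e + (V (xM 0) + B) / ↑S) * ↑S = ↑S * e + (V (xM 0) + B) := by
      field_simp
    rw [hid]
    have h1 := hup S
    have h2 := hVbd (xM S) (hxM S)
    linarith
end

section
/- (Strict dissipativity with linear storage for strictly convex problems.) Let X ⊆ ℝ^n and U ⊆ ℝ^m be such that X × U is compact and convex, let f : ℝ^n × ℝ^m → ℝ^n be affine, and let ℓ : ℝ^n × ℝ^m → ℝ be continuous and strictly convex on X × U. Let (x^e,u^e) ∈ X × U with f(x^e,u^e) = x^e, and suppose p ∈ ℝ^n is a Lagrange multiplier in the sense that (x^e,u^e) minimizes the function (x,u) ↦ ℓ(x,u) + pᵀ(x − f(x,u)) over X × U. Then there exists α ∈ K∞ such that the linear function λ(x) = pᵀx satisfies λ(f(x,u)) ≤ λ(x) + ℓ(x,u) − ℓ(x^e,u^e) − α(‖x − x^e‖) for all (x,u) ∈ X × U; that is, the problem is strictly dissipative with linear storage function λ(x) = pᵀx. -/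
open scoped RealInnerProductSpace

/-- Auxiliary construction: the scaled primitive of a monotone, nonnegative function that is
positive on `(0,∞)` is of class `K∞`, and is bounded by `c * (r * h r)`. -/
lemma kinf_primitive (h : ℝ → ℝ) (hmono : Monotone h) (h0 : ∀ s, 0 ≤ h s)
    (hpos : ∀ s, 0 < s → 0 < h s) (c : ℝ) (hc : 0 < c) :
    KInf (fun r => c * ∫ s in (0:ℝ)..r, h s) ∧
      ∀ r, 0 ≤ r → c * ∫ s in (0:ℝ)..r, h s ≤ c * (r * h r) := by
  have hint : ∀ a b : ℝ, IntervalIntegrable h MeasureTheory.volume a b := fun a b =>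
    hmono.intervalIntegrable
  have key : ∀ a b : ℝ, a ≤ b → ∫ s in a..b, h s ≤ (b - a) * h b := by
    intro a b hab
    calc ∫ s in a..b, h s ≤ ∫ _s in a..b, h b := by
          apply intervalIntegral.integral_mono_on hab (hint a b)
            (intervalIntegrable_const)
          intro x hx; exact hmono hx.2
      _ = (b - a) * h b := by simp
  have keylow : ∀ a b : ℝ, a ≤ b → (b - a) * h a ≤ ∫ s in a..b, h s := by
    intro a b hab
    calc (b - a) * h a = ∫ _s in a..b, h a := by simp
      _ ≤ ∫ s in a..b, h s := by
          apply intervalIntegral.integral_mono_on hab intervalIntegrable_const (hint a b)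
          intro x hx; exact hmono hx.1
  have hnn : ∀ a b : ℝ, a ≤ b → 0 ≤ ∫ s in a..b, h s := by
    intro a b hab
    have := keylow a b hab
    nlinarith [h0 a, sub_nonneg.2 hab]
  have hsplit : ∀ a b d : ℝ, (∫ s in a..b, h s) + ∫ s in b..d, h s = ∫ s in a..d, h s :=
    fun a b d => intervalIntegral.integral_add_adjacent_intervals (hint a b) (hint b d)
  refine ⟨⟨?_, ?_, ?_, ?_, ?_⟩, ?_⟩
  · exact (continuous_const.mul (intervalIntegral.continuous_primitive hint 0)).continuousOn
  · intro a ha b hb hab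
    have hm : a < (a + b) / 2 := by linarith
    have hm2 : (a + b) / 2 ≤ b := by linarith
    have h1 : 0 ≤ ∫ s in a..((a + b) / 2), h s := hnn _ _ hm.le
    have h2 : (b - (a + b) / 2) * h ((a + b) / 2) ≤ ∫ s in ((a + b) / 2)..b, h s :=
      keylow _ _ hm2
    have h3 : 0 < h ((a + b) / 2) := hpos _ (by simp at ha; linarith)
    have h4 : (∫ s in (0:ℝ)..a, h s) + ∫ s in a..b, h s = ∫ s in (0:ℝ)..b, h s := hsplit 0 a b
    have h5 : (∫ s in a..((a+b)/2), h s) + ∫ s in ((a+b)/2)..b, h s = ∫ s in a..b, h s :=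
      hsplit a _ b
    have : 0 < ∫ s in a..b, h s := by nlinarith
    have : (∫ s in (0:ℝ)..a, h s) < ∫ s in (0:ℝ)..b, h s := by linarith
    exact by dsimp only; nlinarith
  · simp
  · intro r hr
    simp only [Set.mem_Ici] at hr
    exact mul_nonneg hc.le (hnn 0 r hr)
  · intro M
    obtain ⟨r, hr1, hrM⟩ : ∃ r : ℝ, 1 ≤ r ∧ M < c * ((r - 1) * h 1) := by
      refine ⟨1 + (|M| + 1) / (c * h 1), ?_, ?_⟩
      · have h1 : (0:ℝ) ≤ (|M| + 1) / (c * h 1) :=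
          div_nonneg (by positivity) (mul_pos hc (hpos 1 one_pos)).le
        linarith
      · have h1 : 0 < c * h 1 := mul_pos hc (hpos 1 one_pos)
        have : c * ((1 + (|M|+1)/(c * h 1) - 1) * h 1) = |M| + 1 := by
          field_simp
          rw [add_sub_cancel_left, mul_div_cancel₀ _ (hpos 1 one_pos).ne']
        rw [this]
        have := abs_nonneg M
        have := le_abs_self M
        linarith
    refine ⟨r, by simp; linarith, ?_⟩
    have h4 : (∫ s in (0:ℝ)..1, h s) + ∫ s in (1:ℝ)..r, h s = ∫ s in (0:ℝ)..r, h s :=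
      hsplit 0 1 r
    have h5 := keylow 1 r hr1
    have h6 := hnn 0 1 zero_le_one
    calc M < c * ((r - 1) * h 1) := hrM
      _ ≤ c * ∫ s in (0:ℝ)..r, h s := by
          apply mul_le_mul_of_nonneg_left _ hc.le
          linarith
  · intro r hr
    exact mul_le_mul_of_nonneg_left (by simpa using key 0 r hr) hc.le

set_option maxHeartbeats 1000000 in
/-- Strict dissipativity with linear storage function for affine dynamics and strictly convex
cost: if `X × U` is compact and convex, `f` is affine, `ℓ` is continuous and strictly convex
on `X × U`, and `p` is a Lagrange multiplier of the optimal equilibrium problem, then the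
problem is strictly dissipative with the linear storage function `λ(x) = pᵀx`. -/
theorem strict_dissipativity_linear_storage_convex {n m : ℕ}
    (X : Set (EuclideanSpace ℝ (Fin n))) (U : Set (EuclideanSpace ℝ (Fin m)))
    (hcomp : IsCompact (X ×ˢ U)) (hconv : Convex ℝ (X ×ˢ U))
    (f : EuclideanSpace ℝ (Fin n) → EuclideanSpace ℝ (Fin m) → EuclideanSpace ℝ (Fin n))
    (A : (EuclideanSpace ℝ (Fin n) × EuclideanSpace ℝ (Fin m)) →ᵃ[ℝ] EuclideanSpace ℝ (Fin n))
    (hf : ∀ x u, f x u = A (x, u))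
    (ℓ : EuclideanSpace ℝ (Fin n) → EuclideanSpace ℝ (Fin m) → ℝ)
    (hℓcont : ContinuousOn (fun p : EuclideanSpace ℝ (Fin n) × EuclideanSpace ℝ (Fin m) =>
      ℓ p.1 p.2) (X ×ˢ U))
    (hℓconv : StrictConvexOn ℝ (X ×ˢ U)
      (fun p : EuclideanSpace ℝ (Fin n) × EuclideanSpace ℝ (Fin m) => ℓ p.1 p.2))
    (xe : EuclideanSpace ℝ (Fin n)) (ue : EuclideanSpace ℝ (Fin m))
    (hxe : xe ∈ X) (hue : ue ∈ U) (heq : f xe ue = xe)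
    (p : EuclideanSpace ℝ (Fin n))
    -- `p` is a Lagrange multiplier: `(xᵉ,uᵉ)` minimizes `ℓ(x,u) + pᵀ(x − f(x,u))` on `X × U`
    (hlagrange : ∀ x ∈ X, ∀ u ∈ U,
      ℓ xe ue + ⟪p, xe - f xe ue⟫ ≤ ℓ x u + ⟪p, x - f x u⟫) :
    ∃ α : ℝ → ℝ, KInf α ∧ ∀ x ∈ X, ∀ u ∈ U,
      ⟪p, f x u⟫ ≤ ⟪p, x⟫ + ℓ x u - ℓ xe ue - α ‖x - xe‖ := by
  classical
  have hze : (xe, ue) ∈ X ×ˢ U := ⟨hxe, hue⟩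
  have hAxe : A (xe, ue) = xe := by rw [← hf]; exact heq
  -- the rotated cost
  set L : EuclideanSpace ℝ (Fin n) × EuclideanSpace ℝ (Fin m) → ℝ :=
    fun z => ℓ z.1 z.2 + (⟪p, z.1 - A z⟫ - ℓ xe ue) with hLdef
  clear_value L
  have hinner0 : ⟪p, xe - f xe ue⟫ = 0 := by rw [heq]; simp
  have hL0 : ∀ z ∈ X ×ˢ U, 0 ≤ L z := by
    intro z hz
    have h1 := hlagrange z.1 hz.1 z.2 hz.2
    rw [hinner0, hf] at h1
    simp only [hLdef]
    linarith
  have hLze : L (xe, ue) = 0 := by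
    rw [hLdef]
    simp [hAxe]
  -- strict convexity of L
  have hg : ConvexOn ℝ (X ×ˢ U)
      (fun z : EuclideanSpace ℝ (Fin n) × EuclideanSpace ℝ (Fin m) =>
        ⟪p, z.1 - A z⟫ - ℓ xe ue) := by
    refine ⟨hconv, ?_⟩
    intro x hx y hy a b ha hb hab
    apply le_of_eq
    have hA : A (a • x + b • y) = a • A x + b • A y := Convex.combo_affine_apply hab
    have h1 : (a • x + b • y).1 = a • x.1 + b • y.1 := rfl
    simp only [smul_eq_mul, h1, hA, inner_sub_right, inner_add_right, real_inner_smul_right]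
    linear_combination (ℓ xe ue) * hab
  have hLconv : StrictConvexOn ℝ (X ×ˢ U) L := by
    rw [hLdef]; exact hℓconv.add_convexOn hg
  have hLpos : ∀ z ∈ X ×ˢ U, z ≠ (xe, ue) → 0 < L z := by
    intro z hz hne
    rcases lt_or_ge 0 (L z) with h | h
    · exact h
    exfalso
    have hmid := hLconv.2 hz hze hne (by norm_num : (0:ℝ) < 1/2)
      (by norm_num : (0:ℝ) < 1/2) (by norm_num)
    have hmem : (1/2 : ℝ) • z + (1/2 : ℝ) • (xe, ue) ∈ X ×ˢ U :=
      hconv hz hze (by norm_num) (by norm_num) (by norm_num)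
    rw [hLze] at hmid
    simp only [smul_eq_mul] at hmid
    exact absurd (hL0 _ hmem) (not_le.2 (lt_of_lt_of_le hmid (by linarith)))
  -- continuity of L
  have hLcont : ContinuousOn L (X ×ˢ U) := by
    rw [hLdef]
    apply hℓcont.add
    apply Continuous.continuousOn
    exact (continuous_const.inner
      (continuous_fst.sub A.continuous_of_finiteDimensional)).sub continuous_const
  -- reduce to finding a K∞ lower bound of L in terms of ‖z.1 - xe‖
  suffices hsuf : ∃ α : ℝ → ℝ, KInf α ∧ ∀ z ∈ X ×ˢ U, α ‖z.1 - xe‖ ≤ L z by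
    obtain ⟨α, hα, hb⟩ := hsuf
    refine ⟨α, hα, ?_⟩
    intro x hx u hu
    have h1 := hb (x, u) ⟨hx, hu⟩
    simp only [hLdef] at h1
    rw [hf]
    have h2 : ⟪p, x - A (x, u)⟫ = ⟪p, x⟫ - ⟪p, A (x, u)⟫ := inner_sub_right _ _ _
    rw [h2] at h1
    linarith
  by_cases hX : ∀ x ∈ X, x = xe
  · -- degenerate case : X = {xe}
    refine ⟨id, ⟨continuous_id.continuousOn, fun a _ b _ hab => hab, rfl,
      fun r hr => hr, fun M => ⟨max M 0 + 1, ?_, ?_⟩⟩, ?_⟩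
    · simp only [Set.mem_Ici]
      have := le_max_right M 0
      linarith
    · have := le_max_left M 0
      simp only [id]
      linarith
    · intro z hz
      have : z.1 = xe := hX z.1 hz.1
      rw [this]
      simpa using hL0 z hz
  · push_neg at hX
    obtain ⟨x₀, hx₀X, hx₀⟩ := hX
    -- maximal distance R > 0
    have hgc : Continuous fun z : EuclideanSpace ℝ (Fin n) × EuclideanSpace ℝ (Fin m) =>
        ‖z.1 - xe‖ := (continuous_fst.sub continuous_const).norm
    obtain ⟨zM, hzMD, hzMmax⟩ := hcomp.exists_isMaxOn ⟨(x₀, ue), hx₀X, hue⟩ hgc.continuousOn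
    set R : ℝ := ‖zM.1 - xe‖ with hRdef
    have hRpos : 0 < R := by
      have h1 : ‖x₀ - xe‖ ≤ R := isMaxOn_iff.1 hzMmax (x₀, ue) ⟨hx₀X, hue⟩
      have h2 : 0 < ‖x₀ - xe‖ := norm_pos_iff.2 (sub_ne_zero.2 hx₀)
      linarith
    have hRbound : ∀ z ∈ X ×ˢ U, ‖z.1 - xe‖ ≤ R := fun z hz => isMaxOn_iff.1 hzMmax z hz
    -- the sublevel-style sets and β
    set S : ℝ → Set (EuclideanSpace ℝ (Fin n) × EuclideanSpace ℝ (Fin m)) :=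
      fun r => {z ∈ X ×ˢ U | min r R ≤ ‖z.1 - xe‖} with hSdef
    have hSne : ∀ r, (S r).Nonempty := fun r => ⟨zM, hzMD, min_le_right r R⟩
    have hSsub : ∀ r, S r ⊆ X ×ˢ U := fun r => Set.sep_subset _ _
    have hbdd : ∀ r, BddBelow (L '' S r) := by
      intro r
      refine ⟨0, ?_⟩
      rintro y ⟨z, hz, rfl⟩
      exact hL0 z (hSsub r hz)
    set β : ℝ → ℝ := fun r => sInf (L '' S r) with hβdef
    have hβmono : Monotone β := by
      intro r₁ r₂ h12
      apply csInf_le_csInf (hbdd r₁) ((hSne r₂).image L)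
      apply Set.image_mono
      intro z hz
      exact ⟨hz.1, le_trans (min_le_min_right R h12) hz.2⟩
    have hβnonneg : ∀ r, 0 ≤ β r := by
      intro r
      apply le_csInf ((hSne r).image L)
      rintro y ⟨z, hz, rfl⟩
      exact hL0 z (hSsub r hz)
    have hβpos : ∀ r, 0 < r → 0 < β r := by
      intro r hr
      have hSclosed : IsClosed {z : EuclideanSpace ℝ (Fin n) × EuclideanSpace ℝ (Fin m) |
          min r R ≤ ‖z.1 - xe‖} := isClosed_le continuous_const hgc
      have hScomp : IsCompact (S r) := hcomp.inter_right hSclosed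
      obtain ⟨z₁, hz₁, hz₁min⟩ :=
        hScomp.exists_isMinOn (hSne r) (hLcont.mono (hSsub r))
      have hz₁ne : z₁ ≠ (xe, ue) := by
        intro hcontra
        have h1 : min r R ≤ ‖z₁.1 - xe‖ := hz₁.2
        rw [hcontra] at h1
        simp only [sub_self, norm_zero] at h1
        have h2 : 0 < min r R := lt_min hr hRpos
        linarith
      have hz₁pos : 0 < L z₁ := hLpos z₁ (hSsub r hz₁) hz₁ne
      have : L z₁ ≤ β r := by
        apply le_csInf ((hSne r).image L)
        rintro y ⟨z, hz, rfl⟩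
        exact isMinOn_iff.1 hz₁min z hz
      linarith
    have hβle : ∀ z ∈ X ×ˢ U, β ‖z.1 - xe‖ ≤ L z := by
      intro z hz
      apply csInf_le (hbdd _)
      exact Set.mem_image_of_mem L ⟨hz, min_le_left _ _⟩
    -- the candidate K∞ function
    set h : ℝ → ℝ := fun s => min (β s) 1 with hhdef
    have hhmono : Monotone h := fun a b hab => min_le_min (hβmono hab) le_rfl
    have hh0 : ∀ s, 0 ≤ h s := fun s => le_min (hβnonneg s) zero_le_one
    have hhpos : ∀ s, 0 < s → 0 < h s := fun s hs => lt_min (hβpos s hs) one_pos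
    have hcpos : (0:ℝ) < (R + 1)⁻¹ := by positivity
    obtain ⟨hK, hbound⟩ := kinf_primitive h hhmono hh0 hhpos ((R + 1)⁻¹) hcpos
    refine ⟨fun r => (R + 1)⁻¹ * ∫ s in (0:ℝ)..r, h s, hK, ?_⟩
    intro z hz
    have hr0 : 0 ≤ ‖z.1 - xe‖ := norm_nonneg _
    have h1 := hbound ‖z.1 - xe‖ hr0
    have h2 : (R + 1)⁻¹ * (‖z.1 - xe‖ * h ‖z.1 - xe‖) ≤ h ‖z.1 - xe‖ := by
      have h3 : ‖z.1 - xe‖ ≤ R + 1 := le_trans (hRbound z hz) (by linarith)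
      have h4 := hh0 ‖z.1 - xe‖
      rw [inv_mul_le_iff₀ (by positivity)]
      nlinarith
    have h5 : h ‖z.1 - xe‖ ≤ β ‖z.1 - xe‖ := min_le_left _ _
    have h6 := hβle z hz
    linarith
end

section
/- (Strict dissipativity implies nonlinear detectability.) Assume ℓ(x,u) ≥ 0 for all x ∈ X, u ∈ U and ℓ(x^e,u^e) = 0, and assume the discrete-time problem is strictly dissipative in one-step form with storage function λ : X → ℝ and α ∈ K∞, i.e., λ(f(x,u)) ≤ λ(x) + ℓ(x,u) − α(‖x−x^e‖) for all x ∈ X, u ∈ U with f(x,u) ∈ X. Assume moreover that λ(x^e) ≤ λ(x) for all x ∈ X and that there exists α₁ ∈ K∞ with λ(x) − λ(x^e) ≤ α₁(‖x−x^e‖) for all x ∈ X. Then W(x) := λ(x) − λ(x^e) satisfies the detectability conditions: W(x) ≥ 0, W(x) ≤ α₁(‖x−x^e‖), and W(f(x,u)) − W(x) ≤ −α(‖x−x^e‖) + α₃(ℓ(x,u)) for all x ∈ X, u ∈ U with f(x,u) ∈ X, where α₃ is the identity function (which belongs to K∞). -/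
/-- Strict dissipativity implies the nonlinear detectability condition of Grimm et al.:
`W(x) = λ(x) − λ(xᵉ)` is nonnegative, bounded by `α₁(‖x−xᵉ‖)`, and satisfies
`W(f(x,u)) − W(x) ≤ −α(‖x−xᵉ‖) + α₃(ℓ(x,u))` with `α₃ = id ∈ K∞`. -/
theorem strict_dissipativity_implies_detectability {n m : ℕ}
    (f : EuclideanSpace ℝ (Fin n) → EuclideanSpace ℝ (Fin m) → EuclideanSpace ℝ (Fin n))
    (X : Set (EuclideanSpace ℝ (Fin n))) (U : Set (EuclideanSpace ℝ (Fin m)))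
    (ℓ : EuclideanSpace ℝ (Fin n) → EuclideanSpace ℝ (Fin m) → ℝ)
    (xe : EuclideanSpace ℝ (Fin n)) (ue : EuclideanSpace ℝ (Fin m))
    (hxe : xe ∈ X) (hue : ue ∈ U) (heq : f xe ue = xe)
    (hℓpos : ∀ x ∈ X, ∀ u ∈ U, 0 ≤ ℓ x u) (hℓe : ℓ xe ue = 0)
    (lam : EuclideanSpace ℝ (Fin n) → ℝ) (α : ℝ → ℝ) (hα : KInf α)
    (hdiss : ∀ x ∈ X, ∀ u ∈ U, f x u ∈ X →
      lam (f x u) ≤ lam x + ℓ x u - α ‖x - xe‖)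
    (hmin : ∀ x ∈ X, lam xe ≤ lam x)
    (α₁ : ℝ → ℝ) (hα₁ : KInf α₁)
    (hupper : ∀ x ∈ X, lam x - lam xe ≤ α₁ ‖x - xe‖)
    (W : EuclideanSpace ℝ (Fin n) → ℝ) (hW : ∀ x, W x = lam x - lam xe)
    (α₃ : ℝ → ℝ) (hα₃ : α₃ = fun r => r) :
    KInf α₃ ∧
    (∀ x ∈ X, 0 ≤ W x) ∧
    (∀ x ∈ X, W x ≤ α₁ ‖x - xe‖) ∧
    (∀ x ∈ X, ∀ u ∈ U, f x u ∈ X →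
      W (f x u) - W x ≤ -α ‖x - xe‖ + α₃ (ℓ x u)) := by
  subst hα₃
  refine ⟨⟨continuousOn_id, fun a _ b _ h => h, rfl, fun r hr => hr,
    fun M => ⟨max M 0 + 1, le_trans (le_max_right M 0) (le_of_lt (lt_add_one _)),
      lt_of_le_of_lt (le_max_left M 0) (lt_add_one _)⟩⟩, ?_, ?_, ?_⟩
  · intro x hx; rw [hW]; linarith [hmin x hx]
  · intro x hx; rw [hW]; exact hupper x hx
  · intro x hx u hu hfx
    rw [hW, hW]
    have := hdiss x hx u hu hfx
    simp only
    linarith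
end

section
/- (Loss of strict dissipativity without state constraints.) Consider the scalar discrete-time system x⁺ = 2x + u with state set X = ℝ, control set U = [−3,3], stage cost ℓ(x,u) = u², and equilibrium (x^e,u^e) = (0,0). Then there do not exist a function λ : ℝ → ℝ bounded from below and α ∈ K∞ such that λ(2x + u) ≤ λ(x) + u² − α(|x|) for all x ∈ ℝ and u ∈ [−3,3]; i.e., the problem on the unbounded state set X = ℝ is not strictly dissipative with supply rate ℓ(x,u) − ℓ(x^e,u^e) = u². -/
/-- Loss of strict dissipativity without state constraints: the scalar system `x⁺ = 2x + u`
with `X = ℝ`, `U = [−3,3]`, stage cost `ℓ(x,u) = u²` and equilibrium `(0,0)` is not strictly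
dissipative: there is no storage function `λ` bounded from below and `α ∈ K∞` with
`λ(2x + u) ≤ λ(x) + u² − α(|x|)` for all `x ∈ ℝ`, `u ∈ [−3,3]`. -/
theorem no_strict_dissipativity_unbounded_state_set :
    ¬ ∃ (lam : ℝ → ℝ) (B : ℝ) (α : ℝ → ℝ),
      (∀ x : ℝ, B ≤ lam x) ∧ KInf α ∧
      (∀ x : ℝ, ∀ u ∈ Set.Icc (-3 : ℝ) 3,
        lam (2 * x + u) ≤ lam x + u ^ 2 - α |x|) := by
  rintro ⟨lam, B, α, hB, ⟨-, hmono, h0, hpos, -⟩, hdiss⟩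
  -- α 1 > 0
  have hα1 : 0 < α 1 := by
    have := hmono (by simp : (0:ℝ) ∈ Set.Ici (0:ℝ)) (by norm_num : (1:ℝ) ∈ Set.Ici (0:ℝ))
      (by norm_num)
    linarith [this, h0.ge]
  -- step inequality with u = 0
  have hstep : ∀ x : ℝ, lam (2 * x) ≤ lam x - α |x| := by
    intro x
    have := hdiss x 0 (by constructor <;> norm_num)
    simpa using this
  -- iterate from x = 1
  have key : ∀ n : ℕ, lam (2 ^ n) ≤ lam 1 - n * α 1 := by
    intro n
    induction n with
    | zero => simp
    | succ n ih =>
      have h1 : (1:ℝ) ≤ 2 ^ n := one_le_pow₀ (by norm_num)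
      have hmge : α 1 ≤ α (2 ^ n) :=
        (hmono.monotoneOn (by norm_num) (by positivity : (0:ℝ) ≤ (2:ℝ)^n)) h1
      have h2 := hstep (2 ^ n)
      have habs : |(2:ℝ) ^ n| = 2 ^ n := abs_of_pos (by positivity)
      rw [habs] at h2
      have : lam (2 ^ (n + 1)) = lam (2 * 2 ^ n) := by ring_nf
      rw [this]
      push_cast
      calc lam (2 * 2 ^ n) ≤ lam (2 ^ n) - α (2 ^ n) := h2
        _ ≤ (lam 1 - n * α 1) - α 1 := by linarith
        _ = lam 1 - (n + 1) * α 1 := by ring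
  -- choose n large
  obtain ⟨n, hn⟩ := exists_nat_gt ((lam 1 - B) / α 1)
  have hlt : lam 1 - B < n * α 1 := by
    rwa [div_lt_iff₀ hα1] at hn
  have := hB (2 ^ n)
  linarith [key n]
end
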